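/- Let 0 ≤ γ2 ≤ γ1 ≤ π/2 with γ1 + γ2 ≤ π/2, and define x3^(3,4)(γ1,γ2) = [−sin γ1 (±sin γ1 + (cos γ1 cos γ2 + sin²γ1) sin γ2)] / [1 + cos γ1 (cos γ2 − sin γ2 (cos γ1 sin γ2 + sin²γ1 tan γ2))], where the + sign gives x3^(3) and the − sign gives x3^(4). Then −1 ≤ x3^(3) ≤ 0 ≤ x3^(4) ≤ 1. -/
import Mathlib


open Real

set_option maxHeartbeats 2000000 in
theorem stmt3 (γ1 γ2 : ℝ)
    (h1 : 0 ≤ γ2) (h2 : γ2 ≤ γ1) (h3 : γ1 ≤ π/2) (h4 : γ1 + γ2 ≤ π/2) :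
    let d := 1 + Real.cos γ1 * (Real.cos γ2 -
      Real.sin γ2 * (Real.cos γ1 * Real.sin γ2 + (Real.sin γ1)^2 * Real.tan γ2))
    let x33 := (-Real.sin γ1 * (Real.sin γ1 +
      (Real.cos γ1 * Real.cos γ2 + (Real.sin γ1)^2) * Real.sin γ2)) / d
    let x34 := (-Real.sin γ1 * (-Real.sin γ1 +
      (Real.cos γ1 * Real.cos γ2 + (Real.sin γ1)^2) * Real.sin γ2)) / d
    ((-1 : ℝ) ≤ x33 ∧ x33 ≤ 0 ∧ 0 ≤ x34 ∧ x34 ≤ 1) := by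
  intro d x33 x34
  have hd' : d = 1 + Real.cos γ1 * (Real.cos γ2 -
      Real.sin γ2 * (Real.cos γ1 * Real.sin γ2 + (Real.sin γ1)^2 * Real.tan γ2)) := rfl
  have hx33' : x33 = (-Real.sin γ1 * (Real.sin γ1 +
      (Real.cos γ1 * Real.cos γ2 + (Real.sin γ1)^2) * Real.sin γ2)) / d := rfl
  have hx34' : x34 = (-Real.sin γ1 * (-Real.sin γ1 +
      (Real.cos γ1 * Real.cos γ2 + (Real.sin γ1)^2) * Real.sin γ2)) / d := rfl
  clear_value x34 x33 d
  set s1 := Real.sin γ1 with hs1def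
  set c1 := Real.cos γ1 with hc1def
  set s2 := Real.sin γ2 with hs2def
  set c2 := Real.cos γ2 with hc2def
  have hg1nn : 0 ≤ γ1 := le_trans h1 h2
  have hpi : (0:ℝ) < π := Real.pi_pos
  have hs2nn : 0 ≤ s2 := Real.sin_nonneg_of_nonneg_of_le_pi h1 (by linarith)
  have hs1nn : 0 ≤ s1 := Real.sin_nonneg_of_nonneg_of_le_pi hg1nn (by linarith)
  have hc1nn : 0 ≤ c1 := Real.cos_nonneg_of_mem_Icc ⟨by linarith, h3⟩
  have hc2pos : 0 < c2 := Real.cos_pos_of_mem_Ioo ⟨by linarith, by linarith⟩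
  have hs21 : s2 ≤ s1 := Real.sin_le_sin_of_le_of_le_pi_div_two (by linarith) h3 h2
  have hc12 : c1 ≤ c2 := Real.cos_le_cos_of_nonneg_of_le_pi h1 (by linarith) h2
  have hs1c2 : s1 ≤ c2 := by
    have := Real.sin_le_sin_of_le_of_le_pi_div_two (x := γ1) (y := π/2 - γ2)
      (by linarith) (by linarith) (by linarith)
    rwa [Real.sin_pi_div_two_sub] at this
  have hs2c1 : s2 ≤ c1 := by
    have := Real.sin_le_sin_of_le_of_le_pi_div_two (x := γ2) (y := π/2 - γ1)
      (by linarith) (by linarith) (by linarith)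
    rwa [Real.sin_pi_div_two_sub] at this
  have hpy1 : s1^2 + c1^2 = 1 := Real.sin_sq_add_cos_sq γ1
  have hpy2 : s2^2 + c2^2 = 1 := Real.sin_sq_add_cos_sq γ2
  have hs1le1 : s1 ≤ 1 := Real.sin_le_one γ1
  have hs2le1 : s2 ≤ 1 := Real.sin_le_one γ2
  have hc2le1 : c2 ≤ 1 := Real.cos_le_one γ2
  have hsum : s1 * c2 + c1 * s2 ≤ 1 := by
    have := Real.sin_le_one (γ1 + γ2)
    rwa [Real.sin_add] at this
  have htan : Real.tan γ2 = s2 / c2 := Real.tan_eq_sin_div_cos γ2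
  -- key: c2 * d
  have hcd : c2 * d = c2 + c1*c2^2 - c1^2*s2^2*c2 - c1*s1^2*s2^2 := by
    rw [hd', htan]
    field_simp
    ring
  have hsqle : s2^2 ≤ c2^2 := by nlinarith [hs2c1, hc12]
  have hinner : 0 ≤ c2^2 - c1*c2*s2^2 - s1^2*s2^2 := by
    nlinarith [mul_le_mul_of_nonneg_right (mul_le_mul hs1c2 hs1c2 hs1nn hc2pos.le) (sq_nonneg s2),
      mul_le_mul_of_nonneg_right (mul_le_mul_of_nonneg_right hc12 hc2pos.le) (sq_nonneg s2),
      mul_nonneg (sq_nonneg c2) (sub_nonneg.mpr hsqle)]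
  have hd1 : 1 ≤ d := by
    have key : c2 * 1 ≤ c2 * d := by
      rw [hcd]; nlinarith [mul_nonneg hc1nn hinner]
    exact le_of_mul_le_mul_left key hc2pos
  have hdpos : 0 < d := by linarith
  have hP : 0 ≤ c1*c2 + s1^2 := add_nonneg (mul_nonneg hc1nn hc2pos.le) (sq_nonneg s1)
  have hpy1c : s1^2*c2 + c1^2*c2 = c2 := by linear_combination c2 * hpy1
  -- mono lemma : s1*(1-c2) ≤ s2*(1-c1)
  have hmono : s1*(1-c2) ≤ s2*(1-c1) := by
    have hA : s1*s2^2*(1+c1) ≤ s2*s1^2*(1+c2) := by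
      nlinarith [mul_nonneg (mul_nonneg hs1nn hs2nn)
        (by nlinarith [mul_le_mul hs1c2 hs2c1 hs2nn hc2pos.le] :
          (0:ℝ) ≤ s1*(1+c2) - s2*(1+c1))]
    have k2' : s1*(1-c2)*((1+c1)*(1+c2)) = s1*s2^2*(1+c1) := by
      linear_combination (-(s1*(1+c1)))*hpy2
    have k1' : s2*(1-c1)*((1+c1)*(1+c2)) = s2*s1^2*(1+c2) := by
      linear_combination (-(s2*(1+c2)))*hpy1
    have hBpos : (0:ℝ) < (1+c1)*(1+c2) :=
      mul_pos (by linarith) (by linarith)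
    exact le_of_mul_le_mul_right (by linarith) hBpos
  have hf : 0 ≤ s1 - (c1*c2 + s1^2)*s2 := by
    have hfid : s1 - (c1*c2+s1^2)*s2 = c2*(s1*c2-c1*s2) - s1*s2*(s1-s2) := by
      linear_combination (-s1) * hpy2
    have e0 : s1 - s2 ≤ s1*c2 - c1*s2 := by nlinarith [hmono]
    have hs1s2 : s1*s2 ≤ c2 := by
      nlinarith [mul_le_mul_of_nonneg_right hs1c2 hs2nn,
        mul_le_mul_of_nonneg_left hs2le1 hc2pos.le]
    have e1 : s1*s2*(s1-s2) ≤ c2*(s1-s2) :=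
      mul_le_mul_of_nonneg_right hs1s2 (by linarith)
    have e2 : c2*(s1-s2) ≤ c2*(s1*c2-c1*s2) :=
      mul_le_mul_of_nonneg_left e0 hc2pos.le
    rw [hfid]; linarith
  refine ⟨?_, ?_, ?_, ?_⟩
  · -- -1 ≤ x33
    rw [hx33', le_div_iff₀ hdpos]
    have e1 : (c1*c2+s1^2)*s2*(c1*s2+s1*c2) ≤ (c1*c2+s1^2)*s2 := by
      nlinarith [mul_nonneg hP hs2nn]
    have e2 : (c1*c2+s1^2)*s2 ≤ (c1*c2+s1^2)*c1 := mul_le_mul_of_nonneg_left hs2c1 hP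
    have e3 : c1*s1^2 ≤ c1*c2^2 := by
      nlinarith [mul_le_mul hs1c2 hs1c2 hs1nn hc2pos.le]
    have key : c2 * (-1 * d) ≤ c2 * (-s1 * (s1 + (c1*c2 + s1^2) * s2)) := by
      nlinarith [hcd, hpy1c, e1, e2, e3]
    linarith [le_of_mul_le_mul_left key hc2pos]
  · -- x33 ≤ 0
    rw [hx33']
    apply div_nonpos_of_nonpos_of_nonneg _ hdpos.le
    have : 0 ≤ s1 * (s1 + (c1*c2 + s1^2) * s2) :=
      mul_nonneg hs1nn (add_nonneg hs1nn (mul_nonneg hP hs2nn))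
    linarith
  · -- 0 ≤ x34
    rw [hx34']
    apply div_nonneg _ hdpos.le
    nlinarith [mul_nonneg hs1nn hf]
  · -- x34 ≤ 1
    rw [hx34', div_le_one hdpos]
    nlinarith [mul_nonneg (mul_nonneg hs1nn hP) hs2nn, sq_nonneg c1, hd1, hpy1]
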